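/- arXiv:1102.3483 — 3 statements merged into one kernel-verified Lean document; each statement's English description precedes it below -/
import Mathlib

section
/- Let X1, X2, X3 be pairwise disjoint nonempty vertex subsets of CQ_3 whose union is the whole vertex set, with |X1| >= |X2| >= |X3| > 0. Then the sum over all pairs 1 <= i < j <= 3 of e(X_i, X_j) is at least 5; moreover, if this sum equals 5, then (|X1|, |X2|, |X3|) = (6, 1, 1) and e(X_i, X_j) > 0 for every pair 1 <= i < j <= 3. -/
/-- Vertices of the 3-dimensional cubes: binary strings `x1x2x3` of length 3. -/
abbrev Vtx3 := Bool × Bool × Bool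

/-- The 12 edges of the 3-dimensional crossed cube `CQ_3`. -/
def cq3EdgeList : List (Vtx3 × Vtx3) :=
  [ ((false,false,false),(false,false,true)),
    ((false,true,false),(false,true,true)),
    ((true,false,false),(true,false,true)),
    ((true,true,false),(true,true,true)),
    ((false,false,false),(false,true,false)),
    ((false,false,true),(false,true,true)),
    ((true,false,false),(true,true,false)),
    ((true,false,true),(true,true,true)),
    ((false,false,false),(true,false,false)),
    ((false,true,false),(true,true,false)),
    ((false,false,true),(true,true,true)),
    ((false,true,true),(true,false,true)) ]

/-- The 3-dimensional crossed cube `CQ_3`. -/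
def CQ3 : SimpleGraph Vtx3 where
  Adj u v := (u, v) ∈ cq3EdgeList ∨ (v, u) ∈ cq3EdgeList
  symm := ⟨fun _ _ h => Or.symm h⟩
  loopless := by
    refine ⟨?_⟩
    intro x
    revert x
    decide

instance : DecidableRel CQ3.Adj :=
  fun u v => inferInstanceAs (Decidable ((u, v) ∈ cq3EdgeList ∨ (v, u) ∈ cq3EdgeList))

/-- `e(X, Y)`: the number of edges of `CQ_3` with one end in `X` and the
other end in `Y` (for disjoint `X`, `Y`). -/
def eXY (X Y : Finset Vtx3) : ℕ :=
  (Finset.univ.filter fun p : Vtx3 × Vtx3 => p.1 ∈ X ∧ p.2 ∈ Y ∧ CQ3.Adj p.1 p.2).card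

/-- The eight vertices. -/
def vList : List Vtx3 :=
  [(false,false,false),(false,false,true),(false,true,false),(false,true,true),
   (true,false,false),(true,false,true),(true,true,false),(true,true,true)]

/-- All 24 ordered pairs of adjacent vertices. -/
def cq3OrdList : List (Vtx3 × Vtx3) := cq3EdgeList ++ cq3EdgeList.map Prod.swap

/-- The finset of the 24 ordered adjacent pairs. -/
def cq3OrdFin : Finset (Vtx3 × Vtx3) := cq3OrdList.toFinset

lemma mem_cq3OrdFin : ∀ p : Vtx3 × Vtx3, p ∈ cq3OrdFin ↔ CQ3.Adj p.1 p.2 := by decide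

lemma eXY_eq (X Y : Finset Vtx3) :
    eXY X Y = (cq3OrdFin.filter fun p => p.1 ∈ X ∧ p.2 ∈ Y).card := by
  unfold eXY
  congr 1
  ext p
  simp only [Finset.mem_filter, Finset.mem_univ, true_and, mem_cq3OrdFin]
  tauto

/-- The part `f⁻¹(i)` as a finset. -/
def cq3Part (f : Vtx3 → Fin 3) (i : Fin 3) : Finset Vtx3 :=
  Finset.univ.filter fun x => f x = i

lemma mem_cq3Part (f : Vtx3 → Fin 3) (i : Fin 3) (x : Vtx3) :
    x ∈ cq3Part f i ↔ f x = i := by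
  simp [cq3Part]

/-- Count of a label in a list of labels. -/
def cntL (l : List (Fin 3)) (i : Fin 3) : ℕ := l.countP fun v => decide (v = i)

/-- Count of labelled ordered pairs. -/
def feL (e : List (Fin 3 × Fin 3)) (i j : Fin 3) : ℕ :=
  e.countP fun q => decide (q.1 = i ∧ q.2 = j)

lemma card_part_eq (f : Vtx3 → Fin 3) (i : Fin 3) :
    (cq3Part f i).card = cntL (vList.map f) i := by
  unfold cntL
  rw [List.countP_map]
  have hv : ∀ x : Vtx3, x ∈ vList := by decide
  have nd : vList.Nodup := by decide
  calc (cq3Part f i).card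
      = ((vList.filter fun x => decide (f x = i)).toFinset).card := by
        congr 1
        ext x
        simp [mem_cq3Part, List.mem_toFinset, List.mem_filter, hv x]
    _ = (vList.filter fun x => decide (f x = i)).length :=
        List.toFinset_card_of_nodup (nd.filter _)
    _ = vList.countP fun x => decide (f x = i) :=
        List.countP_eq_length_filter.symm

lemma eXY_part_eq (f : Vtx3 → Fin 3) (i j : Fin 3) :
    eXY (cq3Part f i) (cq3Part f j)
      = feL (cq3OrdList.map fun p => (f p.1, f p.2)) i j := by
  unfold feL
  rw [List.countP_map, eXY_eq]
  have nd : cq3OrdList.Nodup := by decide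
  calc (cq3OrdFin.filter fun p => p.1 ∈ cq3Part f i ∧ p.2 ∈ cq3Part f j).card
      = ((cq3OrdList.filter fun p => decide (f p.1 = i ∧ f p.2 = j)).toFinset).card := by
        congr 1
        ext p
        simp [cq3OrdFin, mem_cq3Part, List.mem_toFinset, List.mem_filter]
    _ = (cq3OrdList.filter fun p => decide (f p.1 = i ∧ f p.2 = j)).length :=
        List.toFinset_card_of_nodup (nd.filter _)
    _ = cq3OrdList.countP fun p => decide (f p.1 = i ∧ f p.2 = j) :=
        List.countP_eq_length_filter.symm

/-- The abstract check on a list of vertex labels and a list of edge label pairs. -/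
def cq3ChkL (l : List (Fin 3)) (e : List (Fin 3 × Fin 3)) : Prop :=
    (cntL l 2 ≤ cntL l 1 ∧ cntL l 1 ≤ cntL l 0) →
    0 < cntL l 2 →
    5 ≤ feL e 0 1 + feL e 0 2 + feL e 1 2 ∧
    (feL e 0 1 + feL e 0 2 + feL e 1 2 = 5 →
      (cntL l 0 = 6 ∧ cntL l 1 = 1 ∧ cntL l 2 = 1) ∧
      (∀ i j : Fin 3, i < j → 0 < feL e i j))

instance (l : List (Fin 3)) (e : List (Fin 3 × Fin 3)) : Decidable (cq3ChkL l e) := by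
  unfold cq3ChkL; infer_instance

set_option maxRecDepth 10000 in
set_option maxHeartbeats 4000000 in
lemma cq3_keyL : ∀ v0 v1 v2 v3 v4 v5 v6 v7 : Fin 3,
    cq3ChkL [v0, v1, v2, v3, v4, v5, v6, v7]
      [(v0,v1),(v2,v3),(v4,v5),(v6,v7),(v0,v2),(v1,v3),(v4,v6),(v5,v7),
       (v0,v4),(v2,v6),(v1,v7),(v3,v5),
       (v1,v0),(v3,v2),(v5,v4),(v7,v6),(v2,v0),(v3,v1),(v6,v4),(v7,v5),
       (v4,v0),(v6,v2),(v7,v1),(v5,v3)] := by decide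

/-- For a partition of `V(CQ_3)` into three nonempty parts `X 0, X 1, X 2` with
`|X 0| ≥ |X 1| ≥ |X 2| > 0`, the number of crossing edges is at least 5, with
equality forcing part sizes `(6, 1, 1)` and all pairwise counts positive. -/
theorem cq3_three_parts_ge_five (X : Fin 3 → Finset Vtx3)
    (hdisj : ∀ i j, i ≠ j → Disjoint (X i) (X j))
    (hunion : X 0 ∪ X 1 ∪ X 2 = Finset.univ)
    (hord : (X 2).card ≤ (X 1).card ∧ (X 1).card ≤ (X 0).card)
    (hpos : 0 < (X 2).card) :
    5 ≤ eXY (X 0) (X 1) + eXY (X 0) (X 2) + eXY (X 1) (X 2) ∧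
    (eXY (X 0) (X 1) + eXY (X 0) (X 2) + eXY (X 1) (X 2) = 5 →
      ((X 0).card = 6 ∧ (X 1).card = 1 ∧ (X 2).card = 1) ∧
      (∀ i j : Fin 3, i < j → 0 < eXY (X i) (X j))) := by
  classical
  set f : Vtx3 → Fin 3 := fun x => if x ∈ X 0 then 0 else if x ∈ X 1 then 1 else 2 with hf
  have hmem : ∀ x : Vtx3, x ∈ X 0 ∨ x ∈ X 1 ∨ x ∈ X 2 := by
    intro x
    have : x ∈ X 0 ∪ X 1 ∪ X 2 := hunion ▸ Finset.mem_univ x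
    simpa [Finset.mem_union, or_assoc] using this
  have d01 := Finset.disjoint_left.mp (hdisj 0 1 (by decide))
  have d02 := Finset.disjoint_left.mp (hdisj 0 2 (by decide))
  have d12 := Finset.disjoint_left.mp (hdisj 1 2 (by decide))
  have hfx : ∀ x : Vtx3, (f x = 0 ↔ x ∈ X 0) ∧ (f x = 1 ↔ x ∈ X 1) ∧ (f x = 2 ↔ x ∈ X 2) := by
    intro x
    rcases hmem x with h | h | h
    · have h1 : x ∉ X 1 := d01 h
      have h2 : x ∉ X 2 := d02 h
      simp [hf, h, h1, h2]
    · have h0 : x ∉ X 0 := fun h0 => d01 h0 h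
      have h2 : x ∉ X 2 := d12 h
      simp [hf, h, h0, h2]
    · have h0 : x ∉ X 0 := fun h0 => d02 h0 h
      have h1 : x ∉ X 1 := fun h1 => d12 h1 h
      simp [hf, h, h0, h1]
  have hX : ∀ i, X i = cq3Part f i := by
    intro i
    ext x
    simp only [cq3Part, Finset.mem_filter, Finset.mem_univ, true_and]
    fin_cases i
    · exact ((hfx x).1).symm
    · exact ((hfx x).2.1).symm
    · exact ((hfx x).2.2).symm
  have key := cq3_keyL (f (false,false,false)) (f (false,false,true)) (f (false,true,false))
      (f (false,true,true)) (f (true,false,false)) (f (true,false,true))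
      (f (true,true,false)) (f (true,true,true))
  unfold cq3ChkL at key
  simp only [hX, card_part_eq, eXY_part_eq] at hord hpos ⊢
  exact key hord hpos
end

section
/- If u and v are adjacent vertices of LTQ_3, then there exists a set Y of vertices of LTQ_3 disjoint from {u, v} such that ⟨{u, v} ∪ Y⟩ is isomorphic to C_4 (i.e., every edge of LTQ_3 lies in an induced 4-cycle). -/
/-- The 12 edges of the 3-dimensional locally twisted cube `LTQ_3`. -/
def ltq3EdgeList : List (Vtx3 × Vtx3) :=
  [ ((false,false,false),(false,false,true)),
    ((false,false,true),(false,true,true)),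
    ((false,true,true),(false,true,false)),
    ((false,true,false),(false,false,false)),
    ((true,false,false),(true,false,true)),
    ((true,false,true),(true,true,true)),
    ((true,true,true),(true,true,false)),
    ((true,true,false),(true,false,false)),
    ((false,false,false),(true,false,false)),
    ((false,false,true),(true,true,true)),
    ((false,true,false),(true,true,false)),
    ((false,true,true),(true,false,true)) ]

/-- The 3-dimensional locally twisted cube `LTQ_3`. -/
def LTQ3 : SimpleGraph Vtx3 where
  Adj u v := (u, v) ∈ ltq3EdgeList ∨ (v, u) ∈ ltq3EdgeList
  symm := ⟨fun _ _ h => Or.symm h⟩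
  loopless := ⟨by
    intro x
    revert x
    decide⟩

instance : DecidableRel LTQ3.Adj :=
  fun u v => inferInstanceAs (Decidable ((u, v) ∈ ltq3EdgeList ∨ (v, u) ∈ ltq3EdgeList))

def pickList : List (Vtx3 × Vtx3 × Vtx3 × Vtx3) :=
  [ 
    ((false,false,false), (false,false,true), (false,true,true), (false,true,false)),
    ((false,false,true), (false,true,true), (false,true,false), (false,false,false)),
    ((false,true,true), (false,true,false), (false,false,false), (false,false,true)),
    ((false,true,false), (false,false,false), (false,false,true), (false,true,true)),
    ((true,false,false), (true,false,true), (true,true,true), (true,true,false)),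
    ((true,false,true), (true,true,true), (false,false,true), (false,true,true)),
    ((true,true,true), (true,true,false), (true,false,false), (true,false,true)),
    ((true,true,false), (true,false,false), (false,false,false), (false,true,false)),
    ((false,false,false), (true,false,false), (true,true,false), (false,true,false)),
    ((false,false,true), (true,true,true), (true,false,true), (false,true,true)),
    ((false,true,false), (true,true,false), (true,false,false), (false,false,false)),
    ((false,true,true), (true,false,true), (true,true,true), (false,false,true)),
    ((false,false,true), (false,false,false), (false,true,false), (false,true,true)),
    ((false,true,true), (false,false,true), (false,false,false), (false,true,false)),
    ((false,true,false), (false,true,true), (false,false,true), (false,false,false)),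
    ((false,false,false), (false,true,false), (false,true,true), (false,false,true)),
    ((true,false,true), (true,false,false), (true,true,false), (true,true,true)),
    ((true,true,true), (true,false,true), (false,true,true), (false,false,true)),
    ((true,true,false), (true,true,true), (true,false,true), (true,false,false)),
    ((true,false,false), (true,true,false), (false,true,false), (false,false,false)),
    ((true,false,false), (false,false,false), (false,true,false), (true,true,false)),
    ((true,true,true), (false,false,true), (false,true,true), (true,false,true)),
    ((true,true,false), (false,true,false), (false,false,false), (true,false,false)),
    ((true,false,true), (false,true,true), (false,false,true), (true,true,true))
   ]

def pick (u v : Vtx3) : Vtx3 × Vtx3 :=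
  match pickList.find? (fun t => t.1 = u ∧ t.2.1 = v) with
  | some t => (t.2.2.1, t.2.2.2)
  | none => ((false,false,false),(false,false,false))

/-- The conditions making `u,v,w,x` (in this cyclic order) an induced 4-cycle. -/
def GoodQuad (u v w x : Vtx3) : Prop :=
  LTQ3.Adj u v ∧ LTQ3.Adj v w ∧ LTQ3.Adj w x ∧ LTQ3.Adj x u ∧
  ¬ LTQ3.Adj u w ∧ ¬ LTQ3.Adj v x ∧
  u ≠ v ∧ u ≠ w ∧ u ≠ x ∧ v ≠ w ∧ v ≠ x ∧ w ≠ x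

instance (u v w x : Vtx3) : Decidable (GoodQuad u v w x) := by
  unfold GoodQuad; infer_instance

lemma goodQuad_c4 {u v w x : Vtx3} (H : GoodQuad u v w x) :
    Nonempty (LTQ3.induce ({u, v, w, x} : Set Vtx3) ≃g SimpleGraph.cycleGraph 4) := by
  obtain ⟨huv, hvw, hwx, hxu, nuw, nvx, duv, duw, dux, dvw, dvx, dwx⟩ := H
  set S : Set Vtx3 := {u, v, w, x} with hS
  have hu : u ∈ S := by simp [hS]
  have hv : v ∈ S := by simp [hS]
  have hw : w ∈ S := by simp [hS]
  have hx : x ∈ S := by simp [hS]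
  let f : Fin 4 → S := ![⟨u, hu⟩, ⟨v, hv⟩, ⟨w, hw⟩, ⟨x, hx⟩]
  have hbij : Function.Bijective f := by
    constructor
    · intro i j hij
      fin_cases i <;> fin_cases j <;>
        simp_all [f, Subtype.ext_iff]
    · rintro ⟨y, hy⟩
      rcases hy with h | h | h | h
      · exact ⟨0, Subtype.ext h.symm⟩
      · exact ⟨1, Subtype.ext h.symm⟩
      · exact ⟨2, Subtype.ext h.symm⟩
      · exact ⟨3, Subtype.ext h.symm⟩
  let e : Fin 4 ≃ S := Equiv.ofBijective f hbij
  refine ⟨⟨e.symm, ?_⟩⟩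
  have key : ∀ i j : Fin 4,
      (LTQ3.induce S).Adj (e i) (e j) ↔ (SimpleGraph.cycleGraph 4).Adj i j := by
    intro i j
    fin_cases i <;> fin_cases j <;>
      simp_all [e, Equiv.ofBijective, f, SimpleGraph.comap, LTQ3.adj_comm,
        SimpleGraph.cycleGraph] <;> decide
  intro a b
  have := key (e.symm a) (e.symm b)
  simpa using this.symm

/-- Every edge of `LTQ_3` lies in an induced 4-cycle: for adjacent `u, v` there
is a vertex set `Y` disjoint from `{u, v}` with `⟨{u, v} ∪ Y⟩ ≅ C_4`. -/
theorem ltq3_edge_in_c4 (u v : Vtx3) (h : LTQ3.Adj u v) :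
    ∃ Y : Set Vtx3, Disjoint Y ({u, v} : Set Vtx3) ∧
      Nonempty (LTQ3.induce (({u, v} : Set Vtx3) ∪ Y) ≃g SimpleGraph.cycleGraph 4) := by
  have key : ∀ a b : Vtx3, LTQ3.Adj a b → GoodQuad a b (pick a b).1 (pick a b).2 := by decide
  have H := key u v h
  set w := (pick u v).1
  set x := (pick u v).2
  obtain ⟨huv, hvw, hwx, hxu, nuw, nvx, duv, duw, dux, dvw, dvx, dwx⟩ := H
  refine ⟨{w, x}, ?_, ?_⟩
  · rw [Set.disjoint_left]
    rintro y (rfl | rfl) <;> simp_all [eq_comm]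
  · have hU : (({u, v} : Set Vtx3) ∪ {w, x}) = {u, v, w, x} := by
      ext y
      simp only [Set.mem_union, Set.mem_insert_iff, Set.mem_singleton_iff]
      tauto
    rw [hU]
    exact goodQuad_c4 ⟨huv, hvw, hwx, hxu, nuw, nvx, duv, duw, dux, dvw, dvx, dwx⟩
end

section
/- Let u1, u2, u3, u4, u5 be distinct vertices in L (the set of vertices of LTQ_4 whose first bit is 0) such that ⟨{u1, u2, u3, u4}⟩ is isomorphic to C_4. Then for every i in {1, 2, 3, 4}, the set {π(u1), π(u2), π(u3), π(u4), π(u5)} \ {π(u_i)} does not induce a subgraph of LTQ_4 isomorphic to C_4. -/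
/-- Vertices of the 4-dimensional cubes: binary strings `x1x2x3x4` of length 4. -/
abbrev Vtx4 := Bool × Vtx3

/-- The twist map of the locally twisted cube:
`x2x3x4 ↦ (x2+x4)x3x4`, where `+` is addition mod 2. -/
def ltqTwist : Vtx3 → Vtx3
  | (x2, x3, x4) => (xor x2 x4, x3, x4)

/-- The 4-dimensional locally twisted cube `LTQ_4`: two copies of `LTQ_3`
(prefixed with 0 resp. 1), and each `0x2x3x4` joined to `1(x2+x4)x3x4`. -/
def LTQ4 : SimpleGraph Vtx4 where
  Adj u v := (u.1 = v.1 ∧ LTQ3.Adj u.2 v.2)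
    ∨ (u.1 = false ∧ v.1 = true ∧ v.2 = ltqTwist u.2)
    ∨ (u.1 = true ∧ v.1 = false ∧ u.2 = ltqTwist v.2)
  symm := ⟨by
    rintro ⟨b1, x⟩ ⟨b2, y⟩ (⟨h1, h2⟩ | ⟨h1, h2, h3⟩ | ⟨h1, h2, h3⟩)
    · exact Or.inl ⟨h1.symm, h2.symm⟩
    · exact Or.inr (Or.inr ⟨h2, h1, h3⟩)
    · exact Or.inr (Or.inl ⟨h2, h1, h3⟩)⟩
  loopless := ⟨by
    rintro ⟨b, x⟩ (⟨-, h⟩ | ⟨h1, h2, -⟩ | ⟨h1, h2, -⟩)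
    · exact LTQ3.loopless.irrefl x h
    · subst h1; exact Bool.false_ne_true h2
    · subst h2; exact Bool.false_ne_true h1⟩

/-- The map `π` sending a vertex `0x2x3x4` of the left copy `L` of `LTQ_3`
inside `LTQ_4` to its unique neighbour `1(x2+x4)x3x4` in the right copy. -/
def pi4 : Vtx4 → Vtx4 := fun u => (true, ltqTwist u.2)


/-! ### Auxiliary machinery -/

def ltqAdjB : Vtx3 → Vtx3 → Bool
  | (false,false,false), (false,false,true) => true
  | (false,false,false), (false,true,false) => true
  | (false,false,false), (true,false,false) => true
  | (false,false,true), (false,false,false) => true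
  | (false,false,true), (false,true,true) => true
  | (false,false,true), (true,true,true) => true
  | (false,true,false), (false,false,false) => true
  | (false,true,false), (false,true,true) => true
  | (false,true,false), (true,true,false) => true
  | (false,true,true), (false,false,true) => true
  | (false,true,true), (false,true,false) => true
  | (false,true,true), (true,false,true) => true
  | (true,false,false), (false,false,false) => true
  | (true,false,false), (true,false,true) => true
  | (true,false,false), (true,true,false) => true
  | (true,false,true), (false,true,true) => true
  | (true,false,true), (true,false,false) => true
  | (true,false,true), (true,true,true) => true
  | (true,true,false), (false,true,false) => true
  | (true,true,false), (true,false,false) => true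
  | (true,true,false), (true,true,true) => true
  | (true,true,true), (false,false,true) => true
  | (true,true,true), (true,false,true) => true
  | (true,true,true), (true,true,false) => true
  | _, _ => false

def cycB (a b c d : Vtx3) : Bool :=
  ltqAdjB a b && ltqAdjB b c && ltqAdjB c d && ltqAdjB d a

def bimp (g r : Bool) : Bool := !g || r

lemma bimp_elim {g r : Bool} (h : bimp g r = true) (hg : g = true) : r = true := by
  cases g <;> cases r <;> simp_all [bimp]

def ltqVerts : List Vtx3 :=
  [(false,false,false),(false,false,true),(false,true,false),(false,true,true),
   (true,false,false),(true,false,true),(true,true,false),(true,true,true)]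

def bOr4 (w x0 x1 x2 x3 : Vtx3) : Bool := (w == x0) || (w == x1) || (w == x2) || (w == x3)

def innerChk (w0 w1 w2 w3 w4 : Vtx3) : Bool :=
  [w0,w1,w2,w3,w4].all fun x0 =>
  [w0,w1,w2,w3,w4].all fun x1 => bimp (x0 != x1) <|
  [w0,w1,w2,w3,w4].all fun x2 => bimp ((x0 != x2) && (x1 != x2)) <|
  [w0,w1,w2,w3,w4].all fun x3 => bimp ((x0 != x3) && (x1 != x3) && (x2 != x3) &&
    bOr4 w4 x0 x1 x2 x3 &&
    cycB (ltqTwist x0) (ltqTwist x1) (ltqTwist x2) (ltqTwist x3)) false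

def mainChk : Bool :=
  ltqVerts.all fun w0 => ltqVerts.all fun w1 => bimp (ltqAdjB w0 w1) <|
  ltqVerts.all fun w2 => bimp (ltqAdjB w1 w2 && (w0 != w2)) <|
  ltqVerts.all fun w3 => bimp (ltqAdjB w2 w3 && ltqAdjB w3 w0 && (w1 != w3)) <|
  ltqVerts.all fun w4 => bimp ((w4 != w0) && (w4 != w1) && (w4 != w2) && (w4 != w3))
    (innerChk w0 w1 w2 w3 w4)

lemma mainChk_true : mainChk = true := by decide

lemma mem_ltqVerts : ∀ x : Vtx3, x ∈ ltqVerts := by decide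

lemma coreP (w0 w1 w2 w3 w4 : Vtx3)
    (h01 : ltqAdjB w0 w1 = true) (h12 : ltqAdjB w1 w2 = true)
    (h23 : ltqAdjB w2 w3 = true) (h30 : ltqAdjB w3 w0 = true)
    (h02 : w0 ≠ w2) (h13 : w1 ≠ w3)
    (h40 : w4 ≠ w0) (h41 : w4 ≠ w1) (h42 : w4 ≠ w2) (h43 : w4 ≠ w3)
    (x0 x1 x2 x3 : Vtx3)
    (m0 : x0 ∈ [w0,w1,w2,w3,w4]) (m1 : x1 ∈ [w0,w1,w2,w3,w4])
    (m2 : x2 ∈ [w0,w1,w2,w3,w4]) (m3 : x3 ∈ [w0,w1,w2,w3,w4])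
    (d01 : x0 ≠ x1) (d02 : x0 ≠ x2) (d03 : x0 ≠ x3)
    (d12 : x1 ≠ x2) (d13 : x1 ≠ x3) (d23 : x2 ≠ x3)
    (hw4 : w4 = x0 ∨ w4 = x1 ∨ w4 = x2 ∨ w4 = x3)
    (hcyc : cycB (ltqTwist x0) (ltqTwist x1) (ltqTwist x2) (ltqTwist x3) = true) : False := by
  have c1 := List.all_eq_true.mp
    (List.all_eq_true.mp mainChk_true w0 (mem_ltqVerts w0)) w1 (mem_ltqVerts w1)
  have c2 := bimp_elim c1 h01
  have c3 := bimp_elim (List.all_eq_true.mp c2 w2 (mem_ltqVerts w2)) (by simp [h12, h02])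
  have c4 := bimp_elim (List.all_eq_true.mp c3 w3 (mem_ltqVerts w3)) (by simp [h23, h30, h13])
  have c5 := bimp_elim (List.all_eq_true.mp c4 w4 (mem_ltqVerts w4))
    (by simp [h40, h41, h42, h43])
  have i1 := List.all_eq_true.mp c5 x0 m0
  have i2 := bimp_elim (List.all_eq_true.mp i1 x1 m1) (by simp [d01])
  have i3 := bimp_elim (List.all_eq_true.mp i2 x2 m2) (by simp [d02, d12])
  have i4 := List.all_eq_true.mp i3 x3 m3
  have hG : ((x0 != x3) && (x1 != x3) && (x2 != x3) && bOr4 w4 x0 x1 x2 x3 &&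
      cycB (ltqTwist x0) (ltqTwist x1) (ltqTwist x2) (ltqTwist x3)) = true := by
    rcases hw4 with h|h|h|h <;> simp [bOr4, h, d03, d13, d23, hcyc]
  have := bimp_elim i4 hG
  simp at this

lemma ltq3_adj_toB : ∀ x y : Vtx3, LTQ3.Adj x y → ltqAdjB x y = true := by decide

lemma ltqTwist_inj : ∀ x y : Vtx3, ltqTwist x = ltqTwist y → x = y := by decide

lemma fin5_pigeonhole : ∀ (i ka kb kc kd : Fin 5), i.val < 4 →
    ka ≠ kb → ka ≠ kc → ka ≠ kd → kb ≠ kc → kb ≠ kd → kc ≠ kd →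
    ka ≠ i → kb ≠ i → kc ≠ i → kd ≠ i →
    (ka = 4 ∨ kb = 4 ∨ kc = 4 ∨ kd = 4) := by decide

/-- From an isomorphism of an induced subgraph with `C_4`, extract the four
vertices, in cyclic order, together with coverage and distinctness. -/
lemma extract_c4 {V : Type*} {G : SimpleGraph V} {S : Set V}
    (e : G.induce S ≃g SimpleGraph.cycleGraph 4) :
    ∃ a b c d : V, a ∈ S ∧ b ∈ S ∧ c ∈ S ∧ d ∈ S ∧
      (∀ x ∈ S, x = a ∨ x = b ∨ x = c ∨ x = d) ∧
      a ≠ b ∧ a ≠ c ∧ a ≠ d ∧ b ≠ c ∧ b ≠ d ∧ c ≠ d ∧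
      G.Adj a b ∧ G.Adj b c ∧ G.Adj c d ∧ G.Adj d a := by
  have hne : ∀ (i j : Fin 4), i ≠ j → ((e.symm i : S) : V) ≠ ((e.symm j : S) : V) := by
    intro i j hij hv
    exact hij (e.symm.injective (Subtype.ext hv))
  have hadj : ∀ (i j : Fin 4), (SimpleGraph.cycleGraph 4).Adj i j →
      G.Adj ((e.symm i : S) : V) ((e.symm j : S) : V) := by
    intro i j h
    exact e.symm.map_rel_iff.mpr h
  refine ⟨e.symm 0, e.symm 1, e.symm 2, e.symm 3,
    (e.symm 0).2, (e.symm 1).2, (e.symm 2).2, (e.symm 3).2, ?_,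
    hne 0 1 (by decide), hne 0 2 (by decide), hne 0 3 (by decide),
    hne 1 2 (by decide), hne 1 3 (by decide), hne 2 3 (by decide),
    hadj 0 1 (by decide), hadj 1 2 (by decide), hadj 2 3 (by decide), hadj 3 0 (by decide)⟩
  intro x hx
  have h4 : ∀ k : Fin 4, k = 0 ∨ k = 1 ∨ k = 2 ∨ k = 3 := by decide
  have h2 := e.symm_apply_apply ⟨x, hx⟩
  rcases h4 (e ⟨x, hx⟩) with h|h|h|h <;> rw [h] at h2 <;>
    [left; (right; left); (right; right; left); (right; right; right)] <;>
    exact (congrArg Subtype.val h2).symm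

lemma ltq4_adjL {x y : Vtx4} (hx : x.1 = false) (hy : y.1 = false)
    (h : LTQ4.Adj x y) : LTQ3.Adj x.2 y.2 := by
  rcases h with ⟨-, h⟩ | ⟨-, h2, -⟩ | ⟨h1, -, -⟩
  · exact h
  · rw [hy] at h2; exact absurd h2 (by decide)
  · rw [hx] at h1; exact absurd h1 (by decide)

lemma ltq4_adjR {x y : Vtx4} (hx : x.1 = true) (hy : y.1 = true)
    (h : LTQ4.Adj x y) : LTQ3.Adj x.2 y.2 := by
  rcases h with ⟨-, h⟩ | ⟨h1, -, -⟩ | ⟨-, h2, -⟩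
  · exact h
  · rw [hx] at h1; exact absurd h1 (by decide)
  · rw [hy] at h2; exact absurd h2 (by decide)

lemma sndInjL {x y : Vtx4} (hx : x.1 = false) (hy : y.1 = false)
    (h : x.2 = y.2) : x = y := by
  cases x; cases y; simp_all

/-- If `u 0, …, u 4` are distinct vertices of the left copy `L` of `LTQ_3` in
`LTQ_4` such that `{u 0, u 1, u 2, u 3}` induces a `C_4`, then for every
`i ∈ {0, 1, 2, 3}` the set `{π(u 0), …, π(u 4)} \ {π(u i)}` does not induce a
`C_4` in `LTQ_4`. -/
theorem ltq4_c4_image (u : Fin 5 → Vtx4) (hinj : Function.Injective u)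
    (hL : ∀ i, (u i).1 = false)
    (hC4 : Nonempty (LTQ4.induce ({u 0, u 1, u 2, u 3} : Set Vtx4) ≃g
      SimpleGraph.cycleGraph 4)) :
    ∀ i : Fin 5, i.val < 4 →
      ¬Nonempty (LTQ4.induce ((Set.range fun j => pi4 (u j)) \ {pi4 (u i)}) ≃g
        SimpleGraph.cycleGraph 4) := by
  intro i hi hiso'
  obtain ⟨e'⟩ := hiso'
  obtain ⟨e⟩ := hC4
  obtain ⟨a, b, c, d, ha, hb, hc, hd, hcov, hab, hac, had, hbc, hbd, hcd,
    Aab, Abc, Acd, Ada⟩ := extract_c4 e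
  obtain ⟨p, q, r, s, hp, hq, hr, hs, -, hpq, hpr, hps, hqr, hqs, hrs,
    Apq, Aqr, Ars, Asp⟩ := extract_c4 e'
  have memS : ∀ x, x ∈ ({u 0, u 1, u 2, u 3} : Set Vtx4) →
      x = u 0 ∨ x = u 1 ∨ x = u 2 ∨ x = u 3 := by
    intro x hx; simpa using hx
  have hfb : ∀ x, x ∈ ({u 0, u 1, u 2, u 3} : Set Vtx4) → x.1 = false := by
    intro x hx; rcases memS x hx with h|h|h|h <;> rw [h] <;> exact hL _
  have ha1 := hfb a ha
  have hb1 := hfb b hb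
  have hc1 := hfb c hc
  have hd1 := hfb d hd
  have hu4ne : ∀ x, x ∈ ({u 0, u 1, u 2, u 3} : Set Vtx4) → (u 4).2 ≠ x.2 := by
    intro x hx h2
    rcases memS x hx with h|h|h|h <;> rw [h] at h2 <;>
      exact absurd (hinj (sndInjL (hL 4) (hL _) h2)) (by decide)
  -- Boolean adjacency facts for the cycle a-b-c-d
  have B01 : ltqAdjB a.2 b.2 = true := ltq3_adj_toB _ _ (ltq4_adjL ha1 hb1 Aab)
  have B12 : ltqAdjB b.2 c.2 = true := ltq3_adj_toB _ _ (ltq4_adjL hb1 hc1 Abc)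
  have B23 : ltqAdjB c.2 d.2 = true := ltq3_adj_toB _ _ (ltq4_adjL hc1 hd1 Acd)
  have B30 : ltqAdjB d.2 a.2 = true := ltq3_adj_toB _ _ (ltq4_adjL hd1 ha1 Ada)
  have h02' : a.2 ≠ c.2 := fun h => hac (sndInjL ha1 hc1 h)
  have h13' : b.2 ≠ d.2 := fun h => hbd (sndInjL hb1 hd1 h)
  -- unpack the four vertices of the alleged cycle in the image
  simp only [Set.mem_diff, Set.mem_range, Set.mem_singleton_iff] at hp hq hr hs
  obtain ⟨⟨kp, hkp⟩, hp2⟩ := hp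
  obtain ⟨⟨kq, hkq⟩, hq2⟩ := hq
  obtain ⟨⟨kr, hkr⟩, hr2⟩ := hr
  obtain ⟨⟨ks, hks⟩, hs2⟩ := hs
  have hkpi : kp ≠ i := fun h => hp2 (by rw [← hkp, h])
  have hkqi : kq ≠ i := fun h => hq2 (by rw [← hkq, h])
  have hkri : kr ≠ i := fun h => hr2 (by rw [← hkr, h])
  have hksi : ks ≠ i := fun h => hs2 (by rw [← hks, h])
  have hkpq : kp ≠ kq := fun h => hpq (by rw [← hkp, ← hkq, h])
  have hkpr : kp ≠ kr := fun h => hpr (by rw [← hkp, ← hkr, h])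
  have hkps : kp ≠ ks := fun h => hps (by rw [← hkp, ← hks, h])
  have hkqr : kq ≠ kr := fun h => hqr (by rw [← hkq, ← hkr, h])
  have hkqs : kq ≠ ks := fun h => hqs (by rw [← hkq, ← hks, h])
  have hkrs : kr ≠ ks := fun h => hrs (by rw [← hkr, ← hks, h])
  have d01 : (u kp).2 ≠ (u kq).2 := fun h => hpq (by rw [← hkp, ← hkq]; simp [pi4, h])
  have d02 : (u kp).2 ≠ (u kr).2 := fun h => hpr (by rw [← hkp, ← hkr]; simp [pi4, h])
  have d03 : (u kp).2 ≠ (u ks).2 := fun h => hps (by rw [← hkp, ← hks]; simp [pi4, h])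
  have d12 : (u kq).2 ≠ (u kr).2 := fun h => hqr (by rw [← hkq, ← hkr]; simp [pi4, h])
  have d13 : (u kq).2 ≠ (u ks).2 := fun h => hqs (by rw [← hkq, ← hks]; simp [pi4, h])
  have d23 : (u kr).2 ≠ (u ks).2 := fun h => hrs (by rw [← hkr, ← hks]; simp [pi4, h])
  have humem : ∀ k : Fin 5, (u k).2 ∈ [a.2, b.2, c.2, d.2, (u 4).2] := by
    intro k
    have h5 : ∀ k' : Fin 5, k' = 0 ∨ k' = 1 ∨ k' = 2 ∨ k' = 3 ∨ k' = 4 := by decide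
    rcases h5 k with h|h|h|h|h <;> rw [h]
    · rcases hcov (u 0) (by simp) with h'|h'|h'|h' <;> rw [h'] <;> simp
    · rcases hcov (u 1) (by simp) with h'|h'|h'|h' <;> rw [h'] <;> simp
    · rcases hcov (u 2) (by simp) with h'|h'|h'|h' <;> rw [h'] <;> simp
    · rcases hcov (u 3) (by simp) with h'|h'|h'|h' <;> rw [h'] <;> simp
    · simp
  rw [← hkp, ← hkq] at Apq
  rw [← hkq, ← hkr] at Aqr
  rw [← hkr, ← hks] at Ars
  rw [← hks, ← hkp] at Asp
  have E01 : ltqAdjB (ltqTwist ((u kp).2)) (ltqTwist ((u kq).2)) = true :=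
    ltq3_adj_toB _ _ (ltq4_adjR rfl rfl Apq)
  have E12 : ltqAdjB (ltqTwist ((u kq).2)) (ltqTwist ((u kr).2)) = true :=
    ltq3_adj_toB _ _ (ltq4_adjR rfl rfl Aqr)
  have E23 : ltqAdjB (ltqTwist ((u kr).2)) (ltqTwist ((u ks).2)) = true :=
    ltq3_adj_toB _ _ (ltq4_adjR rfl rfl Ars)
  have E30 : ltqAdjB (ltqTwist ((u ks).2)) (ltqTwist ((u kp).2)) = true :=
    ltq3_adj_toB _ _ (ltq4_adjR rfl rfl Asp)
  have hcyc : cycB (ltqTwist ((u kp).2)) (ltqTwist ((u kq).2))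
      (ltqTwist ((u kr).2)) (ltqTwist ((u ks).2)) = true := by
    simp [cycB, E01, E12, E23, E30]
  have hw4 : (u 4).2 = (u kp).2 ∨ (u 4).2 = (u kq).2 ∨
      (u 4).2 = (u kr).2 ∨ (u 4).2 = (u ks).2 := by
    rcases fin5_pigeonhole i kp kq kr ks hi hkpq hkpr hkps hkqr hkqs hkrs
      hkpi hkqi hkri hksi with h|h|h|h
    · left; rw [h]
    · right; left; rw [h]
    · right; right; left; rw [h]
    · right; right; right; rw [h]
  exact coreP a.2 b.2 c.2 d.2 ((u 4).2) B01 B12 B23 B30 h02' h13'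
    (hu4ne a ha) (hu4ne b hb) (hu4ne c hc) (hu4ne d hd)
    ((u kp).2) ((u kq).2) ((u kr).2) ((u ks).2)
    (humem kp) (humem kq) (humem kr) (humem ks)
    d01 d02 d03 d12 d13 d23 hw4 hcyc
end
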